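/- For all integers ℓ ≥ 1 and k ≥ 1, the total number of proper 3-colorings of the graph T(u,v,k,ℓ) is less than 2^(2^(k+ℓ) + 4·3^ℓ). -/

import Mathlib

/-- The base relation for the graph `P(u,v,b)`: vertices are `Sum.inl 0 = u`,
`Sum.inl 1 = v`, and `Sum.inr i = v_{i+1}` (0-indexed path vertices).
Edges: consecutive path vertices, `u` to odd-numbered path vertices `v₁, v₃, …`
(even 0-based index), and `v` to even-numbered ones `v₂, v₄, …`. -/
def PAdj (b : ℕ) : (Fin 2 ⊕ Fin b) → (Fin 2 ⊕ Fin b) → Prop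
  | Sum.inr i, Sum.inr j => (j : ℕ) = (i : ℕ) + 1
  | Sum.inl x, Sum.inr i => (x : ℕ) = (i : ℕ) % 2
  | _, _ => False

/-- The graph `P(u,v,b)`. -/
def Pgraph (b : ℕ) : SimpleGraph (Fin 2 ⊕ Fin b) := SimpleGraph.fromRel (PAdj b)

/-- The set of proper 3-colorings of a graph `G`. -/
def properColorings {V : Type*} (G : SimpleGraph V) : Set (V → Fin 3) :=
  {ψ | ∀ a b, G.Adj a b → ψ a ≠ ψ b}

/-- The type of "inner" vertices of `T(u,v,k,ℓ)` (all vertices except the two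
special vertices `u, v`). At level `0` these are the `2^k` path vertices of
`P(u,v,2^k)`; at level `ℓ+1` they are the five path vertices `v₁,…,v₅` of the
base copy of `P(u,v,5)` together with the inner vertices of the three glued
copies of `T(·,·,k,ℓ)`. -/
def TInner (k : ℕ) : ℕ → Type
  | 0 => Fin (2 ^ k)
  | ℓ + 1 => Fin 5 ⊕ (Fin 3 × TInner k ℓ)

/-- The vertex type of `T(u,v,k,ℓ)`: the special vertices `u = Sum.inl 0`,
`v = Sum.inl 1` together with the inner vertices. -/
abbrev TVert (k ℓ : ℕ) : Type := Fin 2 ⊕ TInner k ℓ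

/-- The pair of path vertices of `P(u,v,5)` onto which the `c`-th copy of
`T(·,·,k,ℓ-1)` is glued: `(v₁,v₃)` for `c = 0`, `(v₂,v₄)` for `c = 1`,
`(v₃,v₅)` for `c = 2` (0-indexed). -/
def gluePair (c : Fin 3) : Fin 5 × Fin 5 :=
  (⟨c.val, by omega⟩, ⟨c.val + 2, by have := c.isLt; omega⟩)

/-- The embedding of the `c`-th copy of `T(·,·,k,ℓ)` into `T(u,v,k,ℓ+1)`:
its special vertices are identified with the glue pair, and its inner vertices
are tagged with `c`. -/
def embedT (k ℓ : ℕ) (c : Fin 3) : TVert k ℓ → TVert k (ℓ + 1)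
  | Sum.inl x => if x = 0 then Sum.inr (Sum.inl (gluePair c).1)
                 else Sum.inr (Sum.inl (gluePair c).2)
  | Sum.inr w => Sum.inr (Sum.inr (c, w))

/-- The embedding of the base copy of `P(u,v,5)` into `T(u,v,k,ℓ+1)`. -/
def embedP (k ℓ : ℕ) : (Fin 2 ⊕ Fin 5) → TVert k (ℓ + 1)
  | Sum.inl x => Sum.inl x
  | Sum.inr y => Sum.inr (Sum.inl y)

/-- The graph `T(u,v,k,ℓ)`, defined recursively: `T(u,v,k,0) = P(u,v,2^k)`, and
`T(u,v,k,ℓ+1)` is obtained from `P(u,v,5)` by gluing three copies of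
`T(·,·,k,ℓ)` onto the pairs `(v₁,v₃)`, `(v₂,v₄)`, `(v₃,v₅)`. -/
def TGraph (k : ℕ) : (ℓ : ℕ) → SimpleGraph (TVert k ℓ)
  | 0 => Pgraph (2 ^ k)
  | ℓ + 1 => SimpleGraph.fromRel (fun a b =>
      (∃ x y, (Pgraph 5).Adj x y ∧ a = embedP k ℓ x ∧ b = embedP k ℓ y) ∨
      (∃ c x y, (TGraph k ℓ).Adj x y ∧ a = embedT k ℓ c x ∧ b = embedT k ℓ c y))


section Aux

/-- glue two endpoint colors with an inner coloring -/
def glue {I : Type*} (a b : Fin 3) (φ : I → Fin 3) : (Fin 2 ⊕ I) → Fin 3 :=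
  Sum.elim (fun x => if x = 0 then a else b) φ

instance TInner.finite : ∀ (k ℓ : ℕ), Finite (TInner k ℓ)
  | _, 0 => inferInstanceAs (Finite (Fin _))
  | k, ℓ + 1 => by
      have := TInner.finite k ℓ
      exact inferInstanceAs (Finite (Fin 5 ⊕ (Fin 3 × TInner k ℓ)))

/-- number of proper colorings with prescribed endpoint colors -/
noncomputable def extCount (k ℓ : ℕ) (a b : Fin 3) : ℕ :=
  Nat.card {φ : TInner k ℓ → Fin 3 // glue a b φ ∈ properColorings (TGraph k ℓ)}

lemma fin3_unique : ∀ a b x y : Fin 3,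
    a ≠ b → x ≠ a → x ≠ b → y ≠ a → y ≠ b → x = y := by decide

lemma fin3_enc : ∀ f x y : Fin 3, x ≠ f → y ≠ f → ((x = f + 1) ↔ (y = f + 1)) → x = y := by
  decide

lemma onePairEq : ∀ a b x0 x1 x2 x3 x4 : Fin 3,
    x0 ≠ x1 → x1 ≠ x2 → x2 ≠ x3 → x3 ≠ x4 →
    x0 ≠ a → x2 ≠ a → x4 ≠ a → x1 ≠ b → x3 ≠ b →
    (x0 = x2 ∨ x1 = x3 ∨ x2 = x4) := by decide

lemma Pgraph_adj_path {b : ℕ} (i j : Fin b) (h : (j : ℕ) = (i : ℕ) + 1) :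
    (Pgraph b).Adj (Sum.inr i) (Sum.inr j) := by
  rw [Pgraph, SimpleGraph.fromRel_adj]
  refine ⟨?_, Or.inl h⟩
  intro he
  have : i = j := by exact Sum.inr.inj he
  omega

lemma Pgraph_adj_special {b : ℕ} (x : Fin 2) (i : Fin b) (h : (x : ℕ) = (i : ℕ) % 2) :
    (Pgraph b).Adj (Sum.inl x) (Sum.inr i) := by
  rw [Pgraph, SimpleGraph.fromRel_adj]
  exact ⟨by simp, Or.inl h⟩

end Aux
section Aux2

lemma fin2_eq01 (x : Fin 2) : x = 0 ∨ x = 1 := by omega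

lemma gluePair_ne (c : Fin 3) : (gluePair c).1 ≠ (gluePair c).2 := by
  simp only [gluePair, ne_eq, Fin.mk.injEq]
  omega

lemma embedP_inj (k ℓ : ℕ) : Function.Injective (embedP k ℓ) := by
  intro x y h
  cases x <;> cases y <;> simp_all [embedP]
  exact Sum.inl.inj (Sum.inr.inj h)

lemma embedT_inj (k ℓ : ℕ) (c : Fin 3) : Function.Injective (embedT k ℓ c) := by
  intro x y h
  have hne := gluePair_ne c
  cases x with
  | inl x =>
    cases y with
    | inl y =>
      rcases fin2_eq01 x with hx | hx <;> rcases fin2_eq01 y with hy | hy <;>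
        subst hx <;> subst hy <;> simp_all [embedT] <;>
        first
          | exact hne (Sum.inl.inj (Sum.inr.inj h))
          | exact hne (Sum.inl.inj (Sum.inr.inj h)).symm
    | inr y =>
      rcases fin2_eq01 x with hx | hx <;> subst hx <;> simp_all [embedT] <;>
        exact Sum.inl_ne_inr (Sum.inr.inj h)
  | inr x =>
    cases y with
    | inl y =>
      rcases fin2_eq01 y with hy | hy <;> subst hy <;> simp_all [embedT] <;>
        exact Sum.inr_ne_inl (Sum.inr.inj h)
    | inr y =>
      simp_all [embedT]
      exact congrArg Prod.snd (Sum.inr.inj (Sum.inr.inj h))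

lemma TGraph_adj_P {k ℓ : ℕ} {x y : Fin 2 ⊕ Fin 5} (h : (Pgraph 5).Adj x y) :
    (TGraph k (ℓ + 1)).Adj (embedP k ℓ x) (embedP k ℓ y) := by
  show (SimpleGraph.fromRel _).Adj _ _
  rw [SimpleGraph.fromRel_adj]
  exact ⟨fun he => h.ne (embedP_inj k ℓ he), Or.inl (Or.inl ⟨x, y, h, rfl, rfl⟩)⟩

lemma TGraph_adj_T {k ℓ : ℕ} (c : Fin 3) {x y : TVert k ℓ} (h : (TGraph k ℓ).Adj x y) :
    (TGraph k (ℓ + 1)).Adj (embedT k ℓ c x) (embedT k ℓ c y) := by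
  show (SimpleGraph.fromRel _).Adj _ _
  rw [SimpleGraph.fromRel_adj]
  exact ⟨fun he => h.ne (embedT_inj k ℓ c he), Or.inl (Or.inr ⟨c, x, y, h, rfl, rfl⟩)⟩

def P5proper (a b : Fin 3) (χ : Fin 5 → Fin 3) : Prop :=
  χ 0 ≠ χ 1 ∧ χ 1 ≠ χ 2 ∧ χ 2 ≠ χ 3 ∧ χ 3 ≠ χ 4 ∧
  χ 0 ≠ a ∧ χ 2 ≠ a ∧ χ 4 ≠ a ∧ χ 1 ≠ b ∧ χ 3 ≠ b

instance (a b : Fin 3) (χ : Fin 5 → Fin 3) : Decidable (P5proper a b χ) := by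
  unfold P5proper; infer_instance

lemma glue_embedT {k ℓ : ℕ} (a b : Fin 3) (φ : TInner k (ℓ + 1) → Fin 3) (c : Fin 3)
    (z : TVert k ℓ) :
    glue (φ (Sum.inl (gluePair c).1)) (φ (Sum.inl (gluePair c).2))
      (fun w => φ (Sum.inr (c, w))) z = glue a b φ (embedT k ℓ c z) := by
  cases z with
  | inl x => rcases fin2_eq01 x with hx | hx <;> subst hx <;> simp [glue, embedT] <;> rfl
  | inr w => rfl

lemma transferP {k ℓ : ℕ} {a b : Fin 3} {φ : TInner k (ℓ + 1) → Fin 3}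
    (hφ : glue a b φ ∈ properColorings (TGraph k (ℓ + 1))) :
    P5proper a b (fun y => φ (Sum.inl y)) := by
  have hpath : ∀ i j : Fin 5, (j : ℕ) = (i : ℕ) + 1 → φ (Sum.inl i) ≠ φ (Sum.inl j) := by
    intro i j hij
    exact hφ _ _ (TGraph_adj_P (Pgraph_adj_path i j hij))
  have hu : ∀ i : Fin 5, (i : ℕ) % 2 = 0 → φ (Sum.inl i) ≠ a := by
    intro i hi
    have := hφ _ _ (TGraph_adj_P (k := k) (ℓ := ℓ) (Pgraph_adj_special 0 i (by simp [hi])))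
    exact fun he => this (by show a = φ (Sum.inl i); exact he.symm)
  have hv : ∀ i : Fin 5, (i : ℕ) % 2 = 1 → φ (Sum.inl i) ≠ b := by
    intro i hi
    have := hφ _ _ (TGraph_adj_P (k := k) (ℓ := ℓ) (Pgraph_adj_special 1 i (by simp [hi])))
    exact fun he => this (by show b = φ (Sum.inl i); exact he.symm)
  exact ⟨hpath 0 1 rfl, hpath 1 2 rfl, hpath 2 3 rfl, hpath 3 4 rfl,
    hu 0 rfl, hu 2 rfl, hu 4 rfl, hv 1 rfl, hv 3 rfl⟩

lemma transferT {k ℓ : ℕ} {a b : Fin 3} {φ : TInner k (ℓ + 1) → Fin 3}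
    (hφ : glue a b φ ∈ properColorings (TGraph k (ℓ + 1))) (c : Fin 3) :
    glue (φ (Sum.inl (gluePair c).1)) (φ (Sum.inl (gluePair c).2))
      (fun w => φ (Sum.inr (c, w))) ∈ properColorings (TGraph k ℓ) := by
  intro x y hxy
  rw [glue_embedT a b φ c x, glue_embedT a b φ c y]
  exact hφ _ _ (TGraph_adj_T c hxy)

end Aux2
section Count

open Finset

lemma natCard_sigma {ι : Type*} [Fintype ι] (f : ι → Type*) [∀ i, Finite (f i)] :
    Nat.card (Σ i, f i) = ∑ i, Nat.card (f i) := by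
  letI : ∀ i, Fintype (f i) := fun i => Fintype.ofFinite _
  simp [Nat.card_eq_fintype_card, Fintype.card_sigma]

/-- card of proper P5 colorings for fixed endpoints is at most 32 -/
lemma P5count (a b : Fin 3) : Nat.card {χ : Fin 5 → Fin 3 // P5proper a b χ} ≤ 32 := by
  have h : Function.Injective
      (fun χ : {χ : Fin 5 → Fin 3 // P5proper a b χ} =>
        (fun i : Fin 5 =>
          decide (χ.1 i = (if (i : ℕ) % 2 = 0 then a else b) + 1) : Fin 5 → Bool)) := by
    intro ⟨χ, hχ⟩ ⟨χ', hχ'⟩ h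
    obtain ⟨h1, h2, h3, h4, h5, h6, h7, h8, h9⟩ := hχ
    obtain ⟨g1, g2, g3, g4, g5, g6, g7, g8, g9⟩ := hχ'
    have hp : ∀ i : Fin 5, χ i ≠ (if (i : ℕ) % 2 = 0 then a else b) →
        χ' i ≠ (if (i : ℕ) % 2 = 0 then a else b) → χ i = χ' i := by
      intro i hi hi'
      refine fin3_enc _ _ _ hi hi' ?_
      have := congrFun h i
      simpa using this
    apply Subtype.ext
    funext i
    fin_cases i
    · exact hp 0 h5 g5
    · exact hp 1 h8 g8
    · exact hp 2 h6 g6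
    · exact hp 3 h9 g9
    · exact hp 4 h7 g7
  calc Nat.card {χ : Fin 5 → Fin 3 // P5proper a b χ}
      ≤ Nat.card (Fin 5 → Bool) := Nat.card_le_card_of_injective _ h
    _ = 32 := by simp [Nat.card_fun]

/-- card of proper P5 colorings for equal endpoints is at most 3 -/
lemma P5countDiag (a : Fin 3) : Nat.card {χ : Fin 5 → Fin 3 // P5proper a a χ} ≤ 3 := by
  have h : Function.Injective
      (fun χ : {χ : Fin 5 → Fin 3 // P5proper a a χ} => χ.1 0) := by
    intro ⟨χ, hχ⟩ ⟨χ', hχ'⟩ h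
    obtain ⟨h1, h2, h3, h4, h5, h6, h7, h8, h9⟩ := hχ
    obtain ⟨g1, g2, g3, g4, g5, g6, g7, g8, g9⟩ := hχ'
    simp only at h
    apply Subtype.ext
    have e0 : χ 0 = χ' 0 := h
    have e1 : χ 1 = χ' 1 := fin3_unique a (χ 0) _ _ (Ne.symm h5) h8 (Ne.symm h1)
      g8 (e0 ▸ Ne.symm g1)
    have e2 : χ 2 = χ' 2 := fin3_unique a (χ 1) _ _ (Ne.symm h8) h6 (Ne.symm h2)
      g6 (e1 ▸ Ne.symm g2)
    have e3 : χ 3 = χ' 3 := fin3_unique a (χ 2) _ _ (Ne.symm h6) h9 (Ne.symm h3)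
      g9 (e2 ▸ Ne.symm g3)
    have e4 : χ 4 = χ' 4 := fin3_unique a (χ 3) _ _ (Ne.symm h9) h7 (Ne.symm h4)
      g7 (e3 ▸ Ne.symm g4)
    funext i
    fin_cases i <;> assumption
  calc Nat.card {χ : Fin 5 → Fin 3 // P5proper a a χ}
      ≤ Nat.card (Fin 3) := Nat.card_le_card_of_injective _ h
    _ = 3 := by simp

end Count
section Rec

open Finset

lemma ext_rec (k ℓ : ℕ) (a b : Fin 3) (M N : ℕ)
    (hM : ∀ χ : Fin 5 → Fin 3, P5proper a b χ →
      extCount k ℓ (χ (gluePair 0).1) (χ (gluePair 0).2) *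
        extCount k ℓ (χ (gluePair 1).1) (χ (gluePair 1).2) *
        extCount k ℓ (χ (gluePair 2).1) (χ (gluePair 2).2) ≤ M)
    (hN : Nat.card {χ : Fin 5 → Fin 3 // P5proper a b χ} ≤ N) :
    extCount k (ℓ + 1) a b ≤ N * M := by
  classical
  set Fib : {χ : Fin 5 → Fin 3 // P5proper a b χ} → Type :=
    fun χ => ∀ c : Fin 3, {φc : TInner k ℓ → Fin 3 //
      glue (χ.1 (gluePair c).1) (χ.1 (gluePair c).2) φc ∈ properColorings (TGraph k ℓ)}
    with hFib
  have instF : ∀ χ, Finite (Fib χ) := fun χ => by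
    rw [hFib]; infer_instance
  set F : {φ : TInner k (ℓ + 1) → Fin 3 // glue a b φ ∈ properColorings (TGraph k (ℓ + 1))} →
      Σ χ, Fib χ :=
    fun φ => ⟨⟨fun y => φ.1 (Sum.inl y), transferP φ.2⟩,
      fun c => ⟨fun w => φ.1 (Sum.inr (c, w)), transferT φ.2 c⟩⟩ with hF
  set G : (Σ χ, Fib χ) → (TInner k (ℓ + 1) → Fin 3) :=
    fun s => Sum.elim s.1.1 (fun p => (s.2 p.1).1 p.2) with hG
  have hGF : ∀ φ, G (F φ) = φ.1 := by
    intro φ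
    funext z
    cases z with
    | inl y => rfl
    | inr p => rfl
  have hFinj : Function.Injective F := by
    intro p q h
    apply Subtype.ext
    rw [← hGF p, ← hGF q, h]
  have step1 : extCount k (ℓ + 1) a b ≤ Nat.card (Σ χ, Fib χ) :=
    Nat.card_le_card_of_injective F hFinj
  have step2 : Nat.card (Σ χ, Fib χ) =
      ∑ χ : {χ : Fin 5 → Fin 3 // P5proper a b χ}, Nat.card (Fib χ) :=
    natCard_sigma Fib
  have step3 : ∀ χ : {χ : Fin 5 → Fin 3 // P5proper a b χ},
      Nat.card (Fib χ) ≤ M := by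
    intro χ
    have : Nat.card (Fib χ) =
        extCount k ℓ (χ.1 (gluePair 0).1) (χ.1 (gluePair 0).2) *
          extCount k ℓ (χ.1 (gluePair 1).1) (χ.1 (gluePair 1).2) *
          extCount k ℓ (χ.1 (gluePair 2).1) (χ.1 (gluePair 2).2) := by
      rw [hFib]
      rw [Nat.card_pi]
      rw [Fin.prod_univ_three]
      rfl
    rw [this]
    exact hM χ.1 χ.2
  calc extCount k (ℓ + 1) a b
      ≤ ∑ χ : {χ : Fin 5 → Fin 3 // P5proper a b χ}, Nat.card (Fib χ) := step2 ▸ step1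
    _ ≤ Fintype.card {χ : Fin 5 → Fin 3 // P5proper a b χ} * M := by
        have := Finset.sum_le_card_nsmul Finset.univ (fun χ => Nat.card (Fib χ)) M
          (fun χ _ => step3 χ)
        simpa [Finset.card_univ, smul_eq_mul] using this
    _ ≤ N * M := by
        have : Fintype.card {χ : Fin 5 → Fin 3 // P5proper a b χ} ≤ N := by
          rw [← Nat.card_eq_fintype_card]; exact hN
        exact Nat.mul_le_mul_right M this

end Rec
section Base

lemma base_facts {k : ℕ} {a b : Fin 3} {φ : Fin (2 ^ k) → Fin 3}
    (hφ : glue a b φ ∈ properColorings (TGraph k 0)) :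
    (∀ i j : Fin (2 ^ k), (j : ℕ) = (i : ℕ) + 1 → φ i ≠ φ j) ∧
    (∀ i : Fin (2 ^ k), (i : ℕ) % 2 = 0 → φ i ≠ a) ∧
    (∀ i : Fin (2 ^ k), (i : ℕ) % 2 = 1 → φ i ≠ b) := by
  have hφ' : glue a b φ ∈ properColorings (Pgraph (2 ^ k)) := hφ
  refine ⟨fun i j hij => hφ' _ _ (Pgraph_adj_path i j hij), ?_, ?_⟩
  · intro i hi
    have := hφ' _ _ (Pgraph_adj_special 0 i (by simp [hi]))
    exact fun he => this (by simpa [glue] using he.symm)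
  · intro i hi
    have := hφ' _ _ (Pgraph_adj_special 1 i (by simp [hi]))
    exact fun he => this (by simpa [glue] using he.symm)

lemma ext_base (k : ℕ) (a b : Fin 3) : extCount k 0 a b ≤ 2 ^ (2 ^ k) := by
  have h : Function.Injective
      (fun φ : {φ : Fin (2 ^ k) → Fin 3 // glue a b φ ∈ properColorings (TGraph k 0)} =>
        (fun i : Fin (2 ^ k) =>
          decide (φ.1 i = (if (i : ℕ) % 2 = 0 then a else b) + 1) : Fin (2 ^ k) → Bool)) := by
    intro ⟨φ, hφ⟩ ⟨φ', hφ'⟩ h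
    obtain ⟨_, hu, hv⟩ := base_facts hφ
    obtain ⟨_, gu, gv⟩ := base_facts hφ'
    apply Subtype.ext
    funext i
    have hne : φ i ≠ (if (i : ℕ) % 2 = 0 then a else b) := by
      rcases Nat.mod_two_eq_zero_or_one (i : ℕ) with hp | hp
      · simpa [hp] using hu i hp
      · simpa [hp] using hv i hp
    have gne : φ' i ≠ (if (i : ℕ) % 2 = 0 then a else b) := by
      rcases Nat.mod_two_eq_zero_or_one (i : ℕ) with hp | hp
      · simpa [hp] using gu i hp
      · simpa [hp] using gv i hp
    refine fin3_enc _ _ _ hne gne ?_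
    have := congrFun h i
    simpa using this
  calc extCount k 0 a b
      ≤ Nat.card (Fin (2 ^ k) → Bool) := Nat.card_le_card_of_injective _ h
    _ = 2 ^ (2 ^ k) := by simp [Nat.card_fun]

lemma ext_base_diag (k : ℕ) (a : Fin 3) : extCount k 0 a a ≤ 2 := by
  have h0 : 0 < 2 ^ k := Nat.pow_pos (by omega)
  have h : Function.Injective
      (fun φ : {φ : Fin (2 ^ k) → Fin 3 // glue a a φ ∈ properColorings (TGraph k 0)} =>
        decide (φ.1 ⟨0, h0⟩ = a + 1)) := by
    intro ⟨φ, hφ⟩ ⟨φ', hφ'⟩ h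
    obtain ⟨hp, hu, hv⟩ := base_facts hφ
    obtain ⟨gp, gu, gv⟩ := base_facts hφ'
    have hna : ∀ i : Fin (2 ^ k), φ i ≠ a := by
      intro i
      rcases Nat.mod_two_eq_zero_or_one (i : ℕ) with hq | hq
      exacts [hu i hq, hv i hq]
    have gna : ∀ i : Fin (2 ^ k), φ' i ≠ a := by
      intro i
      rcases Nat.mod_two_eq_zero_or_one (i : ℕ) with hq | hq
      exacts [gu i hq, gv i hq]
    have key : ∀ n (hn : n < 2 ^ k), φ ⟨n, hn⟩ = φ' ⟨n, hn⟩ := by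
      intro n
      induction n with
      | zero =>
        intro hn
        exact fin3_enc a _ _ (hna _) (gna _) (by simp only at h; exact decide_eq_decide.mp h)
      | succ m ih =>
        intro hn
        have hm : m < 2 ^ k := by omega
        have e := ih hm
        have h1 : φ ⟨m + 1, hn⟩ ≠ φ ⟨m, hm⟩ := (hp ⟨m, hm⟩ ⟨m + 1, hn⟩ rfl).symm
        have g1 : φ' ⟨m + 1, hn⟩ ≠ φ' ⟨m, hm⟩ := (gp ⟨m, hm⟩ ⟨m + 1, hn⟩ rfl).symm
        exact fin3_unique a (φ ⟨m, hm⟩) _ _ (Ne.symm (hna _)) (hna _) h1 (gna _) (e ▸ g1)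
    apply Subtype.ext
    funext i
    have : φ ⟨(i : ℕ), i.isLt⟩ = φ' ⟨(i : ℕ), i.isLt⟩ := key _ _
    simpa using this
  calc extCount k 0 a a
      ≤ Nat.card Bool := Nat.card_le_card_of_injective _ h
    _ = 2 := by simp

end Base
section Main

lemma gp0 : gluePair 0 = (0, 2) := rfl
lemma gp1 : gluePair 1 = (1, 3) := rfl
lemma gp2 : gluePair 2 = (2, 4) := rfl

lemma ext_bound (k : ℕ) : ∀ ℓ : ℕ,
    (∀ a, extCount k ℓ a a ≤ 2 ^ (2 * 3 ^ ℓ - 1)) ∧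
    (∀ a b, extCount k ℓ a b ≤ 2 ^ (2 ^ (k + ℓ) + 3 * (3 ^ ℓ - 1)))
  | 0 => by
    constructor
    · intro a
      simpa using ext_base_diag k a
    · intro a b
      simpa using ext_base k a b
  | ℓ + 1 => by
    obtain ⟨hS, hD⟩ := ext_bound k ℓ
    set s := 2 * 3 ^ ℓ - 1 with hs
    set d := 2 ^ (k + ℓ) + 3 * (3 ^ ℓ - 1) with hd
    have ht : 1 ≤ 3 ^ ℓ := Nat.one_le_pow _ _ (by omega)
    have hu : 1 ≤ 2 ^ (k + ℓ) := Nat.one_le_pow _ _ (by omega)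
    have e3 : 3 ^ (ℓ + 1) = 3 ^ ℓ * 3 := pow_succ 3 ℓ
    have e2 : 2 ^ (k + (ℓ + 1)) = 2 ^ (k + ℓ) * 2 := by
      rw [show k + (ℓ + 1) = (k + ℓ) + 1 by ring, pow_succ]
    constructor
    · intro a
      have hM : ∀ χ : Fin 5 → Fin 3, P5proper a a χ →
          extCount k ℓ (χ (gluePair 0).1) (χ (gluePair 0).2) *
            extCount k ℓ (χ (gluePair 1).1) (χ (gluePair 1).2) *
            extCount k ℓ (χ (gluePair 2).1) (χ (gluePair 2).2) ≤ 2 ^ s * 2 ^ s * 2 ^ s := by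
        intro χ hχ
        obtain ⟨h1, h2, h3, h4, h5, h6, h7, h8, h9⟩ := hχ
        have e02 : χ 0 = χ 2 := fin3_unique a (χ 1) (χ 0) (χ 2) (Ne.symm h8) h5 h1 h6 (Ne.symm h2)
        have e13 : χ 1 = χ 3 := fin3_unique a (χ 2) (χ 1) (χ 3) (Ne.symm h6) h8 h2 h9 (Ne.symm h3)
        have e24 : χ 2 = χ 4 := fin3_unique a (χ 3) (χ 2) (χ 4) (Ne.symm h9) h6 h3 h7 (Ne.symm h4)
        have hsd : ∀ x y : Fin 3, x = y → extCount k ℓ x y ≤ 2 ^ s := by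
          rintro x y rfl; exact hS x
        refine Nat.mul_le_mul (Nat.mul_le_mul (hsd _ _ ?_) (hsd _ _ ?_)) (hsd _ _ ?_)
        exacts [e02, e13, e24]
      have h := ext_rec k ℓ a a _ 3 hM (P5countDiag a)
      refine h.trans ?_
      have hpow : 2 ^ s * 2 ^ s * 2 ^ s = 2 ^ (s + s + s) := by
        rw [pow_add, pow_add]
      rw [hpow]
      calc 3 * 2 ^ (s + s + s) ≤ 4 * 2 ^ (s + s + s) := by omega
        _ = 2 ^ (s + s + s + 2) := by rw [pow_add]; ring
        _ ≤ 2 ^ (2 * 3 ^ (ℓ + 1) - 1) := by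
            apply Nat.pow_le_pow_right (by omega)
            rw [e3]; omega
    · intro a b
      have hM : ∀ χ : Fin 5 → Fin 3, P5proper a b χ →
          extCount k ℓ (χ (gluePair 0).1) (χ (gluePair 0).2) *
            extCount k ℓ (χ (gluePair 1).1) (χ (gluePair 1).2) *
            extCount k ℓ (χ (gluePair 2).1) (χ (gluePair 2).2) ≤ 2 ^ (s + 2 * d) := by
        intro χ hχ
        obtain ⟨h1, h2, h3, h4, h5, h6, h7, h8, h9⟩ := hχ
        have hsd : ∀ x y : Fin 3, x = y → extCount k ℓ x y ≤ 2 ^ s := by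
          rintro x y rfl; exact hS x
        rcases onePairEq a b (χ 0) (χ 1) (χ 2) (χ 3) (χ 4) h1 h2 h3 h4 h5 h6 h7 h8 h9 with
          hc | hc | hc
        · refine le_of_le_of_eq
            (Nat.mul_le_mul (Nat.mul_le_mul (hsd _ _ hc) (hD _ _)) (hD _ _)) ?_
          rw [← pow_add, ← pow_add]; congr 1; ring
        · refine le_of_le_of_eq
            (Nat.mul_le_mul (Nat.mul_le_mul (hD _ _) (hsd _ _ hc)) (hD _ _)) ?_
          rw [← pow_add, ← pow_add]; congr 1; ring
        · refine le_of_le_of_eq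
            (Nat.mul_le_mul (Nat.mul_le_mul (hD _ _) (hD _ _)) (hsd _ _ hc)) ?_
          rw [← pow_add, ← pow_add]; congr 1; ring
      have h := ext_rec k ℓ a b _ 32 hM (P5count a b)
      refine h.trans ?_
      calc 32 * 2 ^ (s + 2 * d) = 2 ^ (s + 2 * d + 5) := by rw [pow_add]; ring
        _ ≤ 2 ^ (2 ^ (k + (ℓ + 1)) + 3 * (3 ^ (ℓ + 1) - 1)) := by
            apply Nat.pow_le_pow_right (by omega)
            rw [e2, e3, hs, hd]; omega

lemma total_le (k ℓ : ℕ) :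
    Nat.card {ψ : TVert k ℓ → Fin 3 // ψ ∈ properColorings (TGraph k ℓ)} ≤
      ∑ p : Fin 3 × Fin 3, extCount k ℓ p.1 p.2 := by
  classical
  have hglue : ∀ ψ : TVert k ℓ → Fin 3,
      glue (ψ (Sum.inl 0)) (ψ (Sum.inl 1)) (fun w => ψ (Sum.inr w)) = ψ := by
    intro ψ
    funext z
    cases z with
    | inl x => rcases fin2_eq01 x with hx | hx <;> subst hx <;> simp [glue]
    | inr w => rfl
  set Fib : Fin 3 × Fin 3 → Type :=
    fun p => {φ : TInner k ℓ → Fin 3 // glue p.1 p.2 φ ∈ properColorings (TGraph k ℓ)}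
    with hFib
  set F : {ψ : TVert k ℓ → Fin 3 // ψ ∈ properColorings (TGraph k ℓ)} → Σ p, Fib p :=
    fun ψ => ⟨(ψ.1 (Sum.inl 0), ψ.1 (Sum.inl 1)),
      ⟨fun w => ψ.1 (Sum.inr w), (hglue ψ.1).symm ▸ ψ.2⟩⟩ with hF
  set G : (Σ p, Fib p) → (TVert k ℓ → Fin 3) := fun s => glue s.1.1 s.1.2 s.2.1 with hG
  have hGF : ∀ ψ, G (F ψ) = ψ.1 := fun ψ => hglue ψ.1
  have hFinj : Function.Injective F := by
    intro p q h
    apply Subtype.ext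
    rw [← hGF p, ← hGF q, h]
  calc Nat.card {ψ : TVert k ℓ → Fin 3 // ψ ∈ properColorings (TGraph k ℓ)}
      ≤ Nat.card (Σ p, Fib p) := Nat.card_le_card_of_injective F hFinj
    _ = ∑ p : Fin 3 × Fin 3, Nat.card (Fib p) := natCard_sigma Fib
    _ = ∑ p : Fin 3 × Fin 3, extCount k ℓ p.1 p.2 := rfl

end Main

/-- For all `ℓ ≥ 1` and `k ≥ 1`, the total number of proper 3-colorings of
`T(u,v,k,ℓ)` is less than `2^(2^(k+ℓ) + 4·3^ℓ)`. -/
theorem stmt11 (k ℓ : ℕ) (hk : 1 ≤ k) (hℓ : 1 ≤ ℓ) :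
    Nat.card {ψ : TVert k ℓ → Fin 3 // ψ ∈ properColorings (TGraph k ℓ)} <
      2 ^ (2 ^ (k + ℓ) + 4 * 3 ^ ℓ) := by
  obtain ⟨hSb, hDb⟩ := ext_bound k ℓ
  have ht : 1 ≤ 3 ^ ℓ := Nat.one_le_pow _ _ (by omega)
  have h1 := total_le k ℓ
  have h2 : ∑ p : Fin 3 × Fin 3, extCount k ℓ p.1 p.2 ≤
      9 * 2 ^ (2 ^ (k + ℓ) + 3 * (3 ^ ℓ - 1)) := by
    calc ∑ p : Fin 3 × Fin 3, extCount k ℓ p.1 p.2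
        ≤ ∑ _p : Fin 3 × Fin 3, 2 ^ (2 ^ (k + ℓ) + 3 * (3 ^ ℓ - 1)) :=
          Finset.sum_le_sum (fun p _ => hDb p.1 p.2)
      _ = 9 * 2 ^ (2 ^ (k + ℓ) + 3 * (3 ^ ℓ - 1)) := by
          rw [Finset.sum_const, Finset.card_univ]
          simp [smul_eq_mul]
  have h3 : 9 * 2 ^ (2 ^ (k + ℓ) + 3 * (3 ^ ℓ - 1)) < 2 ^ (2 ^ (k + ℓ) + 4 * 3 ^ ℓ) := by
    have h9 : (9 : ℕ) < 2 ^ 4 := by norm_num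
    calc 9 * 2 ^ (2 ^ (k + ℓ) + 3 * (3 ^ ℓ - 1))
        < 2 ^ 4 * 2 ^ (2 ^ (k + ℓ) + 3 * (3 ^ ℓ - 1)) :=
          (Nat.mul_lt_mul_right (Nat.pow_pos (by omega))).mpr h9
      _ = 2 ^ (2 ^ (k + ℓ) + 3 * (3 ^ ℓ - 1) + 4) := by rw [pow_add]; ring
      _ ≤ 2 ^ (2 ^ (k + ℓ) + 4 * 3 ^ ℓ) := by
          apply Nat.pow_le_pow_right (by omega)
          omega
  omega
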